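/- arXiv:1704.08337 — 6 statements merged into one kernel-verified Lean document; each statement's English description precedes it below -/
import Mathlib

section
/- Let X be a metric space and let Γ be a group acting on X by isometries such that: (i) there exists a compact subset U ⊆ X with ⋃_{g∈Γ} g•U = X, and (ii) for every y ∈ X and every real C, the set {g ∈ Γ : dist(y, g•y) ≤ C} is finite. Then for every γ ∈ Γ the displacement function x ↦ dist(x, γ•x) attains its infimum: there exists x₀ ∈ X with dist(x₀, γ•x₀) = ⨅_{x∈X} dist(x, γ•x). (Metric form of Selberg's lemma, Proposition 2.9, first part: every element of a discrete cocompact subgroup is semisimple.) -/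
open Pointwise

/-- Metric form of Selberg's lemma (Proposition 2.9, first part): if a group `Γ` acts by
isometries on a metric space `X`, with a compact set `U` whose `Γ`-translates cover `X`,
and for every `y ∈ X` and `C ∈ ℝ` only finitely many `g ∈ Γ` satisfy `dist y (g • y) ≤ C`,
then for every `γ ∈ Γ` the displacement function `x ↦ dist x (γ • x)` attains its infimum. -/
theorem displacement_function_attains_infimum
    (X : Type*) [MetricSpace X] [Nonempty X]
    (Γ : Type*) [Group Γ] [MulAction Γ X]
    (hiso : ∀ (g : Γ) (x y : X), dist (g • x) (g • y) = dist x y)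
    (U : Set X) (hU : IsCompact U)
    (hcov : ∀ x : X, ∃ g : Γ, x ∈ g • U)
    (hfin : ∀ (y : X) (C : ℝ), {g : Γ | dist y (g • y) ≤ C}.Finite)
    (γ : Γ) :
    ∃ x₀ : X, dist x₀ (γ • x₀) = ⨅ x : X, dist x (γ • x) := by
  classical
  set m := ⨅ x : X, dist x (γ • x) with hm
  have hbdd : BddBelow (Set.range fun x : X => dist x (γ • x)) :=
    ⟨0, by rintro _ ⟨x, rfl⟩; exact dist_nonneg⟩
  have hmle : ∀ x : X, m ≤ dist x (γ • x) := fun x => ciInf_le hbdd x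
  -- key conversion : displacement at g • u equals displacement of conjugate at u
  have hconj : ∀ (g : Γ) (u : X),
      dist (g • u) (γ • (g • u)) = dist u ((g⁻¹ * γ * g) • u) := by
    intro g u
    have : γ • (g • u) = g • ((g⁻¹ * γ * g) • u) := by
      rw [smul_smul, smul_smul]; congr 1; group
    rw [this, hiso]
  -- U is nonempty
  obtain ⟨x0⟩ := ‹Nonempty X›
  obtain ⟨g0, hg0⟩ := hcov x0
  obtain ⟨u0, hu0U, -⟩ := hg0
  have hUne : U.Nonempty := ⟨u0, hu0U⟩
  -- a radius bound for U
  obtain ⟨R, hUR⟩ := hU.isBounded.subset_closedBall u0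
  have hR : ∀ u ∈ U, dist u u0 ≤ R := fun u hu => Metric.mem_closedBall.mp (hUR hu)
  -- the finite set of candidate conjugates
  have hkey : ∀ (h : Γ) (u : X), u ∈ U → dist u (h • u) ≤ m + 1 →
      dist u0 (h • u0) ≤ m + 1 + 2 * R := by
    intro h u huU hd
    have h1 : dist u0 (h • u0) ≤ dist u0 u + dist u (h • u) + dist (h • u) (h • u0) :=
      dist_triangle4 _ _ _ _
    have h2 : dist (h • u) (h • u0) = dist u u0 := hiso h u u0
    have h3 : dist u u0 ≤ R := hR u huU
    have h4 : dist u0 u ≤ R := by rw [dist_comm]; exact h3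
    nlinarith
  set T : Set Γ := {h : Γ | dist u0 (h • u0) ≤ m + 1 + 2 * R ∧ ∃ g : Γ, h = g⁻¹ * γ * g}
    with hT
  have hTfin : T.Finite := (hfin u0 (m + 1 + 2 * R)).subset fun h hh => hh.1
  -- approximation: for every ε > 0 there is (h, u) ∈ T × U with small displacement
  have happrox : ∀ ε : ℝ, 0 < ε → ∃ h ∈ T, ∃ u ∈ U, dist u (h • u) < m + ε := by
    intro ε hε
    have hlt : m < m + min ε 1 := by
      have : (0:ℝ) < min ε 1 := lt_min hε one_pos
      linarith
    obtain ⟨x, hx⟩ := exists_lt_of_ciInf_lt (α := ℝ) (f := fun x : X => dist x (γ • x)) hlt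
    obtain ⟨g, hg⟩ := hcov x
    obtain ⟨u, huU, hgu⟩ := hg
    have hgu' : g • u = x := hgu
    set h := g⁻¹ * γ * g with hh
    have hdu : dist u (h • u) < m + min ε 1 := by
      rw [← hconj g u, hgu']; exact hx
    have hdu1 : dist u (h • u) ≤ m + 1 := le_of_lt (lt_of_lt_of_le hdu (by
      have : min ε 1 ≤ 1 := min_le_right _ _
      linarith))
    refine ⟨h, ⟨hkey h u huU hdu1, g, rfl⟩, u, huU, ?_⟩
    exact lt_of_lt_of_le hdu (by have : min ε 1 ≤ ε := min_le_left _ _; linarith)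
  have hTne : T.Nonempty := by
    obtain ⟨h, hhT, -⟩ := happrox 1 one_pos
    exact ⟨h, hhT⟩
  -- for each h, a minimizer of u ↦ dist u (h • u) on U
  have hmin : ∀ h : Γ, ∃ u ∈ U, ∀ v ∈ U, dist u (h • u) ≤ dist v (h • v) := by
    intro h
    have hcont : Continuous fun u : X => dist u (h • u) :=
      continuous_id.dist (Isometry.of_dist_eq (hiso h)).continuous
    obtain ⟨u, huU, hmin⟩ := hU.exists_isMinOn hUne hcont.continuousOn
    exact ⟨u, huU, fun v hv => hmin hv⟩
  choose uc hucU hucmin using hmin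
  -- minimize over the finite set T
  have hFne : hTfin.toFinset.Nonempty := by
    obtain ⟨h, hh⟩ := hTne
    exact ⟨h, hTfin.mem_toFinset.mpr hh⟩
  obtain ⟨h₀, hh₀F, hh₀min⟩ :=
    hTfin.toFinset.exists_min_image (fun h => dist (uc h) (h • uc h)) hFne
  have hh₀T : h₀ ∈ T := hTfin.mem_toFinset.mp hh₀F
  obtain ⟨-, g₀, hg₀⟩ := hh₀T
  refine ⟨g₀ • uc h₀, ?_⟩
  have heq : dist (g₀ • uc h₀) (γ • (g₀ • uc h₀)) = dist (uc h₀) (h₀ • uc h₀) := by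
    rw [hconj, ← hg₀]
  rw [heq]
  refine le_antisymm ?_ ?_
  · -- ≤ m : every ε-approximation bounds the minimum
    refine le_of_forall_pos_lt_add ?_
    intro ε hε
    obtain ⟨h, hhT, u, huU, hu⟩ := happrox ε hε
    calc dist (uc h₀) (h₀ • uc h₀) ≤ dist (uc h) (h • uc h) :=
          hh₀min h (hTfin.mem_toFinset.mpr hhT)
      _ ≤ dist u (h • u) := hucmin h u huU
      _ < m + ε := hu
  · -- ≥ m : it is a displacement of γ
    calc m ≤ dist (g₀ • uc h₀) (γ • (g₀ • uc h₀)) := hmle _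
      _ = dist (uc h₀) (h₀ • uc h₀) := heq
end

section
/- Let G be a Hausdorff, locally compact, second-countable topological group and let Γ be a discrete subgroup of G such that the coset space G⧸Γ is compact. Then for every γ ∈ Γ, writing Z for the centralizer of γ in G, the coset space Z⧸(Z ∩ Γ) is compact. (Selberg's lemma, Proposition 2.9, second part: Γ ∩ Z(γ) is cocompact in Z(γ).) -/
open Set QuotientGroup Pointwise

lemma exists_compact_image_univ
    (G : Type*) [Group G] [TopologicalSpace G] [IsTopologicalGroup G]
    [LocallyCompactSpace G]
    (Γ : Subgroup G) [CompactSpace (G ⧸ Γ)] :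
    ∃ K : Set G, IsCompact K ∧ (QuotientGroup.mk : G → G ⧸ Γ) '' K = Set.univ := by
  set π : G → G ⧸ Γ := QuotientGroup.mk with hπ
  choose N hNc hNn using fun g : G => exists_compact_mem_nhds g
  have hopen : ∀ g : G, IsOpen (π '' interior (N g)) := fun g =>
    (QuotientGroup.isOpenQuotientMap_mk (N := Γ)).isOpenMap _ isOpen_interior
  have hcover : (Set.univ : Set (G ⧸ Γ)) ⊆ ⋃ g, π '' interior (N g) := by
    rintro q -
    obtain ⟨g, rfl⟩ := QuotientGroup.mk_surjective q
    exact Set.mem_iUnion.2 ⟨g, ⟨g, mem_interior_iff_mem_nhds.2 (hNn g), rfl⟩⟩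
  obtain ⟨t, ht⟩ := isCompact_univ.elim_finite_subcover _ hopen hcover
  refine ⟨⋃ g ∈ t, N g, t.isCompact_biUnion (fun g _ => hNc g), ?_⟩
  apply Set.eq_univ_of_univ_subset
  intro q hq
  obtain ⟨g, hgt, x, hx, rfl⟩ := by simpa using ht hq
  exact ⟨x, Set.mem_biUnion hgt (interior_subset hx), rfl⟩

/-- Selberg's lemma (Proposition 2.9, second part): if `Γ` is a discrete subgroup of a
Hausdorff, locally compact, second-countable topological group `G` with `G ⧸ Γ` compact,
then for every `γ ∈ Γ` the quotient `Z(γ) ⧸ (Z(γ) ∩ Γ)` of the centralizer `Z(γ)` of `γ`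
in `G` is compact. -/
theorem centralizer_cocompact_of_discrete_cocompact
    (G : Type*) [Group G] [TopologicalSpace G] [IsTopologicalGroup G]
    [T2Space G] [LocallyCompactSpace G] [SecondCountableTopology G]
    (Γ : Subgroup G) [DiscreteTopology Γ] [CompactSpace (G ⧸ Γ)]
    (γ : G) (hγ : γ ∈ Γ) :
    CompactSpace (↥(Subgroup.centralizer {γ}) ⧸
      Γ.subgroupOf (Subgroup.centralizer {γ})) := by
  classical
  set Z : Subgroup G := Subgroup.centralizer {γ} with hZ
  obtain ⟨K, hKc, hKim⟩ := exists_compact_image_univ G Γ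
  -- decomposition of any `g` as `k * l` with `k ∈ K`, `l ∈ Γ`
  have hdec : ∀ g : G, ∃ k ∈ K, ∃ l : G, l ∈ Γ ∧ g = k * l := by
    intro g
    have hg : (QuotientGroup.mk g : G ⧸ Γ) ∈ (QuotientGroup.mk : G → G ⧸ Γ) '' K := by
      rw [hKim]; trivial
    obtain ⟨k, hk, hkq⟩ := hg
    have hmem : k⁻¹ * g ∈ Γ := QuotientGroup.eq.mp hkq
    exact ⟨k, hk, k⁻¹ * g, hmem, by group⟩
  -- the compact set of possible conjugates, intersected with Γ is finite
  have hZclosed : IsClosed (Z : Set G) := by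
    have : (Z : Set G) = {g : G | g * γ = γ * g} := by
      ext g
      simp [hZ, Subgroup.mem_centralizer_singleton_iff]
    rw [this]
    exact isClosed_eq (continuous_id.mul continuous_const)
      (continuous_const.mul continuous_id)
  set D : Set G := {c | c ∈ (Γ : Set G) ∩ ((K⁻¹ * ({γ} : Set G)) * K) ∧ ∃ l, l ∈ Γ ∧ l * γ * l⁻¹ = c}
    with hD
  have hDfin : D.Finite := by
    have hCc : IsCompact ((Γ : Set G) ∩ ((K⁻¹ * ({γ} : Set G)) * K)) :=
      ((hKc.inv.mul isCompact_singleton).mul hKc).inter_left Subgroup.isClosed_of_discrete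
    have hCfin : ((Γ : Set G) ∩ ((K⁻¹ * ({γ} : Set G)) * K)).Finite :=
      hCc.finite (isDiscrete_iff_discreteTopology.mpr (DiscreteTopology.of_subset inferInstance Set.inter_subset_left))
    exact hCfin.subset fun c hc => hc.1
  choose! w hwΓ hwconj using fun c (hc : c ∈ D) => hc.2
  set F : Set G := w '' D with hF
  have hFfin : F.Finite := hDfin.image w
  -- key decomposition within Z
  have key : ∀ z : G, z ∈ Z → ∃ u ∈ (Z : Set G) ∩ (K * F), ∃ μ, μ ∈ Z ∧ μ ∈ Γ ∧ z = u * μ := by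
    intro z hz
    obtain ⟨k, hk, l, hlΓ, hzkl⟩ := hdec z
    have hzγ : z * γ = γ * z := (Subgroup.mem_centralizer_singleton_iff).mp hz
    set c : G := l * γ * l⁻¹ with hc
    have hcΓ : c ∈ Γ := Subgroup.mul_mem _ (Subgroup.mul_mem _ hlΓ hγ) (Subgroup.inv_mem _ hlΓ)
    have hceq : c = k⁻¹ * γ * k := by
      have hl : l = k⁻¹ * z := by rw [hzkl]; group
      rw [hc, hl]
      have : z * γ * z⁻¹ = γ := by rw [hzγ]; group
      calc k⁻¹ * z * γ * (k⁻¹ * z)⁻¹ = k⁻¹ * (z * γ * z⁻¹) * k := by group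
        _ = k⁻¹ * γ * k := by rw [this]
    have hcD : c ∈ D := by
      refine ⟨⟨hcΓ, ?_⟩, l, hlΓ, rfl⟩
      rw [hceq]
      exact Set.mul_mem_mul (Set.mul_mem_mul (Set.inv_mem_inv.mpr hk) (Set.mem_singleton γ)) hk
    have hwc : w c * γ * (w c)⁻¹ = c := hwconj c hcD
    set μ : G := (w c)⁻¹ * l with hμ
    have hμΓ : μ ∈ Γ := Subgroup.mul_mem _ (Subgroup.inv_mem _ (hwΓ c hcD)) hlΓ
    have hμZ : μ ∈ Z := by
      rw [Subgroup.mem_centralizer_singleton_iff]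
      have h1 : l * γ * l⁻¹ = w c * γ * (w c)⁻¹ := by rw [hwc]
      have : μ * γ * μ⁻¹ = γ := by
        rw [hμ]
        calc (w c)⁻¹ * l * γ * ((w c)⁻¹ * l)⁻¹
            = (w c)⁻¹ * (l * γ * l⁻¹) * w c := by group
          _ = (w c)⁻¹ * (w c * γ * (w c)⁻¹) * w c := by rw [h1]
          _ = γ := by group
      calc μ * γ = (μ * γ * μ⁻¹) * μ := by group
        _ = γ * μ := by rw [this]
    refine ⟨k * w c, ⟨?_, Set.mul_mem_mul hk ⟨c, hcD, rfl⟩⟩, μ, hμZ, hμΓ, ?_⟩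
    · have : k * w c = z * μ⁻¹ := by rw [hzkl, hμ]; group
      rw [this]
      exact Subgroup.mul_mem _ hz (Subgroup.inv_mem _ hμZ)
    · rw [hzkl, hμ]; group
  -- conclude compactness of the quotient
  have hScompact : IsCompact ((Subtype.val : Z → G) ⁻¹' (K * F)) := by
    have h1 : IsCompact ((Z : Set G) ∩ (K * F)) :=
      (hKc.mul hFfin.isCompact).inter_left hZclosed
    have hemb := hZclosed.isClosedEmbedding_subtypeVal
    rw [hemb.isCompact_iff]
    have heq : (Subtype.val : Z → G) '' ((Subtype.val : Z → G) ⁻¹' (K * F))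
        = (Z : Set G) ∩ (K * F) := by
      rw [Set.image_preimage_eq_inter_range, Subtype.range_coe, Set.inter_comm]
    exact heq ▸ h1
  rw [← isCompact_univ_iff]
  have himg : (Set.univ : Set (Z ⧸ Γ.subgroupOf Z)) =
      QuotientGroup.mk '' ((Subtype.val : Z → G) ⁻¹' (K * F)) := by
    refine (Set.eq_univ_of_univ_subset ?_).symm
    rintro q -
    obtain ⟨z, rfl⟩ := QuotientGroup.mk_surjective q
    obtain ⟨u, ⟨huZ, huKF⟩, μ, hμZ, hμΓ, hzu⟩ := key z z.2
    refine ⟨⟨u, huZ⟩, huKF, ?_⟩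
    rw [QuotientGroup.eq]
    rw [Subgroup.mem_subgroupOf]
    show (⟨u, huZ⟩ : Z)⁻¹.val * z.val ∈ Γ
    have : (⟨u, huZ⟩ : Z)⁻¹.val * z.val = u⁻¹ * z.val := rfl
    rw [this, hzu]
    simpa using hμΓ
  rw [himg]
  exact hScompact.image continuous_quot_mk
end

section
/- Let V be a finite-dimensional real vector space of dimension n and f an endomorphism of V. If the eigenspace ker(f − id_V) has dimension at least 2, then ∑_{j=0}^{n} (−1)^j · j · tr(Λ^j f) = 0. (The vanishing criterion from equation (4.2.9) used in the proof of Theorem 4.2.2.) -/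
open ExteriorAlgebra

/-- The endomorphism of the `j`-th exterior power `⋀[R]^j M` induced by an endomorphism
`f` of `M` (the restriction to `⋀[R]^j M` of the algebra morphism `Λ•f`). -/
noncomputable def exteriorPowerMap {R M : Type*} [CommRing R] [AddCommGroup M] [Module R M]
    (j : ℕ) (f : M →ₗ[R] M) : ⋀[R]^j M →ₗ[R] ⋀[R]^j M :=
  (ExteriorAlgebra.map f).toLinearMap.restrict (p := ⋀[R]^j M) (q := ⋀[R]^j M)
    (fun x hx => by
      rw [← ιMulti_span_fixedDegree] at hx ⊢
      induction hx using Submodule.span_induction with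
      | mem y hy =>
        obtain ⟨m, rfl⟩ := hy
        exact Submodule.subset_span ⟨f ∘ m, (map_apply_ιMulti f m).symm⟩
      | zero => simp
      | add y z _ _ h1 h2 =>
        rw [map_add]; exact Submodule.add_mem _ h1 h2
      | smul r y _ h =>
        rw [map_smul]; exact Submodule.smul_mem _ r h)




namespace VanishAux

variable {V : Type*} [AddCommGroup V] [Module ℝ V] [FiniteDimensional ℝ V]

instance expow_finite (j : ℕ) : Module.Finite ℝ ↥(⋀[ℝ]^j V) := by
  rw [Module.Finite.iff_fg]
  refine Submodule.FG.pow ?_ j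
  rw [← Submodule.map_top]
  exact Submodule.FG.map _ (Module.finite_def.mp inferInstance)

lemma mul_ι_mem {j : ℕ} (e : V) {x : ExteriorAlgebra ℝ V} (hx : x ∈ ⋀[ℝ]^j V) :
    ι ℝ e * x ∈ ⋀[ℝ]^(j+1) V := by
  show ι ℝ e * x ∈ (LinearMap.range (ι ℝ (M := V))) ^ (j+1)
  rw [pow_succ']
  exact Submodule.mul_mem_mul (LinearMap.mem_range_self _ e) hx

lemma one_mem_expow_zero : (1 : ExteriorAlgebra ℝ V) ∈ ⋀[ℝ]^0 V := by
  show (1 : ExteriorAlgebra ℝ V) ∈ (LinearMap.range (ι ℝ (M := V))) ^ 0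
  rw [pow_zero]
  exact Submodule.one_le.mp le_rfl

/-- Interior product on the exterior algebra. -/
noncomputable def contr (d : Module.Dual ℝ V) :
    ExteriorAlgebra ℝ V →ₗ[ℝ] ExteriorAlgebra ℝ V :=
  CliffordAlgebra.contractLeft (Q := (0 : QuadraticForm ℝ V)) d

lemma contr_ι_mul (d : Module.Dual ℝ V) (a : V) (b : ExteriorAlgebra ℝ V) :
    contr d (ι ℝ a * b) = d a • b - ι ℝ a * contr d b :=
  CliffordAlgebra.contractLeft_ι_mul _ _ _

lemma contr_one (d : Module.Dual ℝ V) : contr d (1 : ExteriorAlgebra ℝ V) = 0 :=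
  CliffordAlgebra.contractLeft_one (Q := (0 : QuadraticForm ℝ V)) d

lemma contract_expow_zero (d : Module.Dual ℝ V) {x : ExteriorAlgebra ℝ V}
    (hx : x ∈ ⋀[ℝ]^0 V) : contr d x = 0 := by
  have hx' : x ∈ (LinearMap.range (ι ℝ (M := V))) ^ 0 := hx
  rw [pow_zero] at hx'
  obtain ⟨r, rfl⟩ := Submodule.mem_one.mp hx'
  exact CliffordAlgebra.contractLeft_algebraMap (Q := (0 : QuadraticForm ℝ V)) d r

lemma contract_mem (d : Module.Dual ℝ V) :
    ∀ (j : ℕ) {x : ExteriorAlgebra ℝ V}, x ∈ ⋀[ℝ]^(j+1) V →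
      contr d x ∈ ⋀[ℝ]^j V := by
  intro j
  induction j with
  | zero =>
    intro x hx
    rw [← ιMulti_span_fixedDegree] at hx
    induction hx using Submodule.span_induction with
    | mem y hy =>
      obtain ⟨m, rfl⟩ := hy
      rw [ιMulti_succ_apply, ιMulti_zero_apply, contr_ι_mul, contr_one, mul_zero, sub_zero]
      exact Submodule.smul_mem _ _ one_mem_expow_zero
    | zero => rw [map_zero]; exact Submodule.zero_mem _
    | add y z _ _ h1 h2 => rw [map_add]; exact Submodule.add_mem _ h1 h2
    | smul r y _ h => rw [map_smul]; exact Submodule.smul_mem _ r h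
  | succ j ih =>
    intro x hx
    rw [← ιMulti_span_fixedDegree] at hx
    induction hx using Submodule.span_induction with
    | mem y hy =>
      obtain ⟨m, rfl⟩ := hy
      rw [ιMulti_succ_apply, contr_ι_mul]
      have hmem : ιMulti ℝ (j+1) (Matrix.vecTail m) ∈ ⋀[ℝ]^(j+1) V :=
        ιMulti_range ℝ (j+1) ⟨Matrix.vecTail m, rfl⟩
      exact Submodule.sub_mem _ (Submodule.smul_mem _ _ hmem)
        (mul_ι_mem _ (ih hmem))
    | zero => rw [map_zero]; exact Submodule.zero_mem _
    | add y z _ _ h1 h2 => rw [map_add]; exact Submodule.add_mem _ h1 h2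
    | smul r y _ h => rw [map_smul]; exact Submodule.smul_mem _ r h

lemma expow_top_bot (n : ℕ) (hn : Module.finrank ℝ V = n) : ⋀[ℝ]^(n+1) V = ⊥ := by
  rw [← ιMulti_span_fixedDegree, Submodule.span_eq_bot]
  rintro x ⟨m, rfl⟩
  refine AlternatingMap.map_linearDependent _ _ fun hli => ?_
  have := hli.fintype_card_le_finrank
  simp [hn] at this


lemma cartan (d : Module.Dual ℝ V) (e : V) (hde : d e = 1) (y : ExteriorAlgebra ℝ V) :
    contr d (ι ℝ e * y) + ι ℝ e * contr d y = y := by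
  rw [contr_ι_mul, hde, one_smul, sub_add_cancel]

section Homotopy

variable (φ : ExteriorAlgebra ℝ V →ₗ[ℝ] ExteriorAlgebra ℝ V)
  (e : V) (d : Module.Dual ℝ V)

/-- The composite `ι_d ∘ (e ∧ ·) ∘ φ`. -/
noncomputable def psi : ExteriorAlgebra ℝ V →ₗ[ℝ] ExteriorAlgebra ℝ V :=
  contr d ∘ₗ LinearMap.mulLeft ℝ (ι ℝ e) ∘ₗ φ

lemma psi_apply (x : ExteriorAlgebra ℝ V) : psi φ e d x = contr d (ι ℝ e * φ x) := rfl

variable (hφ : ∀ (j : ℕ), ∀ x ∈ ⋀[ℝ]^j V, φ x ∈ ⋀[ℝ]^j V)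

include hφ

lemma psi_mem (j : ℕ) : ∀ x ∈ ⋀[ℝ]^j V, psi φ e d x ∈ ⋀[ℝ]^j V := fun x hx =>
  contract_mem d j (mul_ι_mem e (hφ j x hx))

lemma trace_zero_step (hde : d e = 1) :
    LinearMap.trace ℝ _ (φ.restrict (hφ 0)) =
      LinearMap.trace ℝ _ ((psi φ e d).restrict (psi_mem φ e d hφ 0)) := by
  have hχval : ∀ x ∈ ⋀[ℝ]^0 V, ι ℝ e * contr d (φ x) = 0 := fun x hx => by
    rw [contract_expow_zero d (hφ 0 x hx), mul_zero]
  have hχ0 : ∀ x ∈ ⋀[ℝ]^0 V,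
      (LinearMap.mulLeft ℝ (ι ℝ e) ∘ₗ contr d ∘ₗ φ) x ∈ ⋀[ℝ]^0 V := fun x hx => by
    show ι ℝ e * contr d (φ x) ∈ _
    rw [hχval x hx]; exact Submodule.zero_mem _
  have hsplit : φ.restrict (hφ 0) = (psi φ e d).restrict (psi_mem φ e d hφ 0)
      + (LinearMap.mulLeft ℝ (ι ℝ e) ∘ₗ contr d ∘ₗ φ).restrict hχ0 := by
    refine LinearMap.ext fun x => Subtype.ext ?_
    show φ x.1 = psi φ e d x.1 + ι ℝ e * contr d (φ x.1)
    rw [psi_apply]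
    exact (cartan d e hde (φ x.1)).symm
  have hz : (LinearMap.mulLeft ℝ (ι ℝ e) ∘ₗ contr d ∘ₗ φ).restrict hχ0 = 0 := by
    refine LinearMap.ext fun x => Subtype.ext ?_
    show ι ℝ e * contr d (φ x.1) = 0
    exact hχval x.1 x.2
  rw [hsplit, map_add, hz, map_zero, add_zero]

lemma trace_succ_step (hde : d e = 1) (hcomm : ∀ x, φ (ι ℝ e * x) = ι ℝ e * φ x) (j : ℕ) :
    LinearMap.trace ℝ _ (φ.restrict (hφ (j+1))) =
      LinearMap.trace ℝ _ ((psi φ e d).restrict (psi_mem φ e d hφ (j+1))) +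
      LinearMap.trace ℝ _ ((psi φ e d).restrict (psi_mem φ e d hφ j)) := by
  have hχmem : ∀ x ∈ ⋀[ℝ]^(j+1) V,
      (LinearMap.mulLeft ℝ (ι ℝ e) ∘ₗ contr d ∘ₗ φ) x ∈ ⋀[ℝ]^(j+1) V := fun x hx => by
    show ι ℝ e * contr d (φ x) ∈ _
    exact mul_ι_mem e (contract_mem d j (hφ (j+1) x hx))
  have hsplit : φ.restrict (hφ (j+1)) = (psi φ e d).restrict (psi_mem φ e d hφ (j+1))
      + (LinearMap.mulLeft ℝ (ι ℝ e) ∘ₗ contr d ∘ₗ φ).restrict hχmem := by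
    refine LinearMap.ext fun x => Subtype.ext ?_
    show φ x.1 = psi φ e d x.1 + ι ℝ e * contr d (φ x.1)
    rw [psi_apply]
    exact (cartan d e hde (φ x.1)).symm
  rw [hsplit, map_add]
  congr 1
  have hmul : ∀ x ∈ ⋀[ℝ]^j V, (LinearMap.mulLeft ℝ (ι ℝ e)) x ∈ ⋀[ℝ]^(j+1) V :=
    fun x hx => mul_ι_mem e hx
  have hcf : ∀ x ∈ ⋀[ℝ]^(j+1) V, (contr d ∘ₗ φ) x ∈ ⋀[ℝ]^j V :=
    fun x hx => contract_mem d j (hφ (j+1) x hx)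
  have hdecomp : (LinearMap.mulLeft ℝ (ι ℝ e) ∘ₗ contr d ∘ₗ φ).restrict hχmem =
      ((LinearMap.mulLeft ℝ (ι ℝ e)).restrict hmul) ∘ₗ ((contr d ∘ₗ φ).restrict hcf) := by
    refine LinearMap.ext fun x => Subtype.ext ?_
    rfl
  rw [hdecomp, LinearMap.trace_comp_comm']
  congr 1
  refine LinearMap.ext fun x => Subtype.ext ?_
  show contr d (φ (ι ℝ e * x.1)) = psi φ e d x.1
  rw [psi_apply, hcomm]

lemma trace_top_step (n : ℕ) (hbot : ⋀[ℝ]^(n+1) V = ⊥) :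
    LinearMap.trace ℝ _ ((psi φ e d).restrict (psi_mem φ e d hφ n)) = 0 := by
  have hz : (psi φ e d).restrict (psi_mem φ e d hφ n) = 0 := by
    refine LinearMap.ext fun x => Subtype.ext ?_
    show psi φ e d x.1 = 0
    have h1 : ι ℝ e * φ x.1 ∈ ⋀[ℝ]^(n+1) V := mul_ι_mem e (hφ n x.1 x.2)
    rw [hbot, Submodule.mem_bot] at h1
    rw [psi_apply, h1, map_zero]
  rw [hz, map_zero]

end Homotopy

lemma sum_weighted (t a : ℕ → ℝ) (h0 : t 0 = a 0) (hs : ∀ j, t (j+1) = a (j+1) + a j) :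
    ∀ n : ℕ, ∑ j ∈ Finset.range (n+1), (-1:ℝ)^j * j * t j
      = (-1:ℝ)^n * (n+1) * a n - ∑ j ∈ Finset.range (n+1), (-1:ℝ)^j * a j := by
  intro n
  induction n with
  | zero => simp [h0]
  | succ n ih =>
    rw [Finset.sum_range_succ, ih, hs]
    conv_rhs => rw [Finset.sum_range_succ]
    push_cast
    ring

lemma sum_alt (t a : ℕ → ℝ) (h0 : t 0 = a 0) (hs : ∀ j, t (j+1) = a (j+1) + a j) :
    ∀ n : ℕ, ∑ j ∈ Finset.range (n+1), (-1:ℝ)^j * t j = (-1:ℝ)^n * a n := by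
  intro n
  induction n with
  | zero => simp [h0]
  | succ n ih =>
    rw [Finset.sum_range_succ, ih, hs]
    ring

end VanishAux


set_option maxHeartbeats 1000000 in
/-- The vanishing criterion from equation (4.2.9): if the fixed space `ker(f − 1)` of an
endomorphism `f` of an `n`-dimensional real vector space has dimension at least `2`, then
`∑_{j=0}^{n} (−1)^j j tr(Λ^j f) = 0`. -/
theorem alternating_weighted_trace_sum_eq_zero_of_two_le_finrank_fixed
    (V : Type*) [AddCommGroup V] [Module ℝ V] [FiniteDimensional ℝ V]
    (n : ℕ) (hn : Module.finrank ℝ V = n) (f : V →ₗ[ℝ] V)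
    (hfix : 2 ≤ Module.finrank ℝ ↥(LinearMap.ker (f - LinearMap.id))) :
    ∑ j ∈ Finset.range (n + 1),
      (-1 : ℝ) ^ j * (j : ℝ) * LinearMap.trace ℝ (⋀[ℝ]^j V) (exteriorPowerMap j f) = 0 := by
  classical
  open VanishAux in
  -- two linearly independent fixed vectors
  let K : Submodule ℝ V := LinearMap.ker (f - LinearMap.id)
  let bK := Module.finBasis ℝ ↥K
  let v : Fin 2 → V := fun i => ((bK (Fin.castLE hfix i)) : V)
  have hvK : ∀ i, v i ∈ K := fun i => (bK (Fin.castLE hfix i)).2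
  have hfv : ∀ i, f (v i) = v i := by
    intro i
    have h := hvK i
    rw [LinearMap.mem_ker, LinearMap.sub_apply, LinearMap.id_apply, sub_eq_zero] at h
    exact h
  have hli : LinearIndependent ℝ v := by
    have h1 : LinearIndependent ℝ fun i : Fin 2 => bK (Fin.castLE hfix i) :=
      bK.linearIndependent.comp _ (Fin.castLE_injective hfix)
    exact h1.map' K.subtype (Submodule.ker_subtype K)
  have hne : v 0 ≠ v 1 := fun h => by simpa using hli.injective h
  have hsr : LinearIndepOn ℝ id (Set.range v) := hli.linearIndepOn_id
  let B := Module.Basis.extend hsr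
  have hmem0 : v 0 ∈ hsr.extend (Set.subset_univ _) := hsr.subset_extend _ ⟨0, rfl⟩
  have hmem1 : v 1 ∈ hsr.extend (Set.subset_univ _) := hsr.subset_extend _ ⟨1, rfl⟩
  let α : Module.Dual ℝ V := B.coord ⟨v 0, hmem0⟩
  let β : Module.Dual ℝ V := B.coord ⟨v 1, hmem1⟩
  have hB0 : B ⟨v 0, hmem0⟩ = v 0 := Module.Basis.extend_apply_self hsr _
  have hB1 : B ⟨v 1, hmem1⟩ = v 1 := Module.Basis.extend_apply_self hsr _
  have hα0 : α (v 0) = 1 := by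
    rw [← hB0]
    show B.coord ⟨v 0, hmem0⟩ (B ⟨v 0, hmem0⟩) = 1
    rw [Module.Basis.coord_apply, Module.Basis.repr_self, Finsupp.single_eq_same]
  have hα1 : α (v 1) = 0 := by
    rw [← hB1]
    show B.coord ⟨v 0, hmem0⟩ (B ⟨v 1, hmem1⟩) = 0
    rw [Module.Basis.coord_apply, Module.Basis.repr_self]
    exact Finsupp.single_eq_of_ne' (fun h => hne (congrArg Subtype.val h).symm)
  have hβ1 : β (v 1) = 1 := by
    rw [← hB1]
    show B.coord ⟨v 1, hmem1⟩ (B ⟨v 1, hmem1⟩) = 1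
    rw [Module.Basis.coord_apply, Module.Basis.repr_self, Finsupp.single_eq_same]
  -- the algebra endomorphism
  let F : ExteriorAlgebra ℝ V →ₗ[ℝ] ExteriorAlgebra ℝ V := (ExteriorAlgebra.map f).toLinearMap
  have hF : ∀ (j : ℕ), ∀ x ∈ ⋀[ℝ]^j V, F x ∈ ⋀[ℝ]^j V := fun j x hx =>
    (exteriorPowerMap j f ⟨x, hx⟩).2
  have hcommF : ∀ (i : Fin 2) (x : ExteriorAlgebra ℝ V),
      F (ι ℝ (v i) * x) = ι ℝ (v i) * F x := fun i x => by
    show ExteriorAlgebra.map f (ι ℝ (v i) * x) = ι ℝ (v i) * ExteriorAlgebra.map f x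
    rw [map_mul, map_apply_ι, hfv i]
  have hswap : ∀ y : ExteriorAlgebra ℝ V,
      ι ℝ (v 0) * (ι ℝ (v 1) * y) = -(ι ℝ (v 1) * (ι ℝ (v 0) * y)) := fun y => by
    rw [← mul_assoc, ← mul_assoc, ← neg_mul]
    congr 1
    exact eq_neg_of_add_eq_zero_left (ExteriorAlgebra.ι_add_mul_swap (v 0) (v 1))
  set G : ExteriorAlgebra ℝ V →ₗ[ℝ] ExteriorAlgebra ℝ V := psi F (v 0) α with hGdef
  have hG : ∀ (j : ℕ), ∀ x ∈ ⋀[ℝ]^j V, G x ∈ ⋀[ℝ]^j V := psi_mem F (v 0) α hF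
  have hcommG : ∀ x : ExteriorAlgebra ℝ V, G (ι ℝ (v 1) * x) = ι ℝ (v 1) * G x := by
    intro x
    rw [hGdef, psi_apply, psi_apply, hcommF 1 x]
    rw [contr_ι_mul, contr_ι_mul, contr_ι_mul, hα0, hα1, one_smul, zero_smul, zero_sub,
      mul_neg, sub_neg_eq_add, mul_sub, one_smul, hswap, ← sub_eq_add_neg]
  have hbot : ⋀[ℝ]^(n+1) V = ⊥ := expow_top_bot n hn
  -- stage 1
  let t1 : ℕ → ℝ := fun j => LinearMap.trace ℝ _ (F.restrict (hF j))
  let a1 : ℕ → ℝ := fun j => LinearMap.trace ℝ _ (G.restrict (hG j))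
  have h0 : t1 0 = a1 0 := trace_zero_step F (v 0) α hF hα0
  have hs : ∀ j, t1 (j+1) = a1 (j+1) + a1 j := fun j =>
    trace_succ_step F (v 0) α hF hα0 (hcommF 0) j
  have ht : a1 n = 0 := trace_top_step F (v 0) α hF n hbot
  -- stage 2
  let a2 : ℕ → ℝ := fun j => LinearMap.trace ℝ _ ((psi G (v 1) β).restrict (psi_mem G (v 1) β hG j))
  have h0' : a1 0 = a2 0 := trace_zero_step G (v 1) β hG hβ1
  have hs' : ∀ j, a1 (j+1) = a2 (j+1) + a2 j := fun j =>
    trace_succ_step G (v 1) β hG hβ1 hcommG j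
  have ht' : a2 n = 0 := trace_top_step G (v 1) β hG n hbot
  have hconv : ∀ j, LinearMap.trace ℝ (⋀[ℝ]^j V) (exteriorPowerMap j f) = t1 j := fun j => rfl
  calc ∑ j ∈ Finset.range (n + 1),
      (-1 : ℝ) ^ j * (j : ℝ) * LinearMap.trace ℝ (⋀[ℝ]^j V) (exteriorPowerMap j f)
      = ∑ j ∈ Finset.range (n + 1), (-1 : ℝ) ^ j * (j : ℝ) * t1 j := by
        exact Finset.sum_congr rfl fun j _ => by rw [hconv j]
    _ = (-1:ℝ)^n * (n+1) * a1 n - ∑ j ∈ Finset.range (n+1), (-1:ℝ)^j * a1 j :=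
        sum_weighted t1 a1 h0 hs n
    _ = 0 := by rw [ht, sum_alt a1 a2 h0' hs' n, ht']; ring
end

section
/- Let V = V⁺ ⊕ V⁻ be a finite-dimensional complex inner product space with an orthogonal ℤ₂-grading, let D be a self-adjoint endomorphism of V that is odd (D(V⁺) ⊆ V⁻ and D(V⁻) ⊆ V⁺), and let H be an even endomorphism (H(V^±) ⊆ V^±) commuting with D. Then for every real t, str(H ∘ exp(−t D²)) = str(H restricted to ker D), where str(A) = tr(τ A) with τ = id on V⁺ and τ = −id on V⁻. In particular str(H exp(−tD²)) is independent of t. (Finite-dimensional McKean–Singer formula, the mechanism of Theorem 1.1.) -/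
/-- In finite dimension, `exp ℂ A` fixes any vector killed by `A`. -/
private lemma exp_apply_of_eq_zero
    (V : Type*) [NormedAddCommGroup V] [InnerProductSpace ℂ V] [FiniteDimensional ℂ V]
    (A : V →L[ℂ] V) (x : V) (h : A x = 0) : NormedSpace.exp A x = x := by
  have hs : Summable fun n : ℕ => ((Nat.factorial n : ℂ)⁻¹) • A ^ n :=
    NormedSpace.expSeries_summable' A
  rw [NormedSpace.exp_eq_tsum ℂ]
  have := (ContinuousLinearMap.apply ℂ V x).map_tsum hs
  simp only [ContinuousLinearMap.apply_apply] at this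
  rw [this]
  rw [tsum_eq_single 0]
  · simp
  · intro n hn
    obtain ⟨m, rfl⟩ := Nat.exists_eq_succ_of_ne_zero hn
    simp [pow_succ, h]

/-- Finite-dimensional McKean–Singer formula (the mechanism of Theorem 1.1): for a
self-adjoint odd endomorphism `D` and an even endomorphism `H` commuting with `D` on a
finite-dimensional ℤ₂-graded complex inner product space `V = V⁺ ⊕ V⁻` (orthogonal
grading, with grading operator `τ = ±1` on `V^±`), one has for every real `t`
`str(H exp(−tD²)) = str(H|_{ker D})`, where the right-hand side is computed as the trace
of `τ ∘ H` composed with the orthogonal projection onto `ker D`. -/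
theorem mcKeanSinger_finite_dimensional
    (V : Type*) [NormedAddCommGroup V] [InnerProductSpace ℂ V] [FiniteDimensional ℂ V]
    (Vp Vm : Submodule ℂ V) (hcompl : IsCompl Vp Vm)
    (horth : ∀ x ∈ Vp, ∀ y ∈ Vm, (inner ℂ x y : ℂ) = 0)
    (τ : V →ₗ[ℂ] V) (hτp : ∀ x ∈ Vp, τ x = x) (hτm : ∀ x ∈ Vm, τ x = -x)
    (D H : V →L[ℂ] V)
    (hD : ∀ x y : V, (inner ℂ (D x) y : ℂ) = (inner ℂ x (D y) : ℂ))
    (hDodd : (∀ x ∈ Vp, D x ∈ Vm) ∧ (∀ x ∈ Vm, D x ∈ Vp))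
    (hHeven : (∀ x ∈ Vp, H x ∈ Vp) ∧ (∀ x ∈ Vm, H x ∈ Vm))
    (hcomm : H ∘L D = D ∘L H) (t : ℝ) :
    LinearMap.trace ℂ V
        (τ ∘ₗ (H ∘L NormedSpace.exp (-(t : ℂ) • (D ∘L D))).toLinearMap) =
      LinearMap.trace ℂ V
        (τ ∘ₗ H.toLinearMap ∘ₗ
          ((LinearMap.ker (D : V →ₗ[ℂ] V)).subtype ∘ₗ
            (Submodule.orthogonalProjectionOnto (LinearMap.ker (D : V →ₗ[ℂ] V))).toLinearMap)) := by
  classical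
  set K : Submodule ℂ V := LinearMap.ker (D : V →ₗ[ℂ] V) with hKdef
  set A : V →L[ℂ] V := -(t : ℂ) • (D ∘L D) with hAdef
  set M : V →ₗ[ℂ] V := (H ∘L NormedSpace.exp A).toLinearMap with hMdef
  set Dl : V →ₗ[ℂ] V := (D : V →ₗ[ℂ] V) with hDldef
  set Pk : V →ₗ[ℂ] V := K.subtype ∘ₗ (Submodule.orthogonalProjectionOnto K).toLinearMap with hPkdef
  set Pw : V →ₗ[ℂ] V := Kᗮ.subtype ∘ₗ (Submodule.orthogonalProjectionOnto Kᗮ).toLinearMap with hPwdef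
  -- membership in the kernel kills D
  have hker : ∀ x : V, x ∈ K → D x = 0 := fun x hx => hx
  -- D preserves Kᗮ
  have hDW : ∀ x ∈ Kᗮ, Dl x ∈ Kᗮ := by
    intro x hx
    rw [Submodule.mem_orthogonal]
    intro u hu
    have h1 : (inner ℂ u (D x) : ℂ) = inner ℂ (D u) x := (hD u x).symm
    rw [hDldef]
    simp only [ContinuousLinearMap.coe_coe]
    rw [h1, hker u hu, inner_zero_left]
  set Dw : Kᗮ →ₗ[ℂ] Kᗮ := Dl.restrict hDW with hDwdef
  have hDwcoe : ∀ z : Kᗮ, ((Dw z : Kᗮ) : V) = D (z : V) := by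
    intro z; rw [hDwdef, LinearMap.restrict_coe_apply]; rfl
  have hinj : Function.Injective Dw := by
    rw [← LinearMap.ker_eq_bot]
    rw [LinearMap.ker_eq_bot']
    intro z hz
    have h1 : D (z : V) = 0 := by
      rw [← hDwcoe z, hz]; rfl
    have hzK : (z : V) ∈ K := h1
    have : (z : V) ∈ K ⊓ Kᗮ := ⟨hzK, z.2⟩
    have hz0 : (z : V) = 0 := by
      rwa [K.inf_orthogonal_eq_bot, Submodule.mem_bot] at this
    exact Subtype.ext hz0
  have hsurj : Function.Surjective Dw := LinearMap.injective_iff_surjective.mp hinj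
  set eDw : Kᗮ ≃ₗ[ℂ] Kᗮ := LinearEquiv.ofBijective Dw ⟨hinj, hsurj⟩ with heDwdef
  have heDw : ∀ z : Kᗮ, eDw z = Dw z := fun z => rfl
  set E : V →ₗ[ℂ] V :=
    Kᗮ.subtype ∘ₗ (eDw.symm : Kᗮ →ₗ[ℂ] Kᗮ) ∘ₗ (Submodule.orthogonalProjectionOnto Kᗮ).toLinearMap
    with hEdef
  -- D ∘ E = Pw, pointwise
  have hDE : ∀ x : V, D (E x) = Pw x := by
    intro x
    set w : Kᗮ := Submodule.orthogonalProjectionOnto Kᗮ x with hw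
    have h1 : E x = ((eDw.symm w : Kᗮ) : V) := rfl
    rw [h1, ← hDwcoe (eDw.symm w)]
    have h2 : Dw (eDw.symm w) = w := by
      rw [← heDw (eDw.symm w), eDw.apply_symm_apply]
    rw [h2]
    rfl
  -- E ∘ D = Pw, pointwise
  have hED : ∀ x : V, E (D x) = Pw x := by
    intro x
    have hx : ((Submodule.orthogonalProjectionOnto K x : K) : V) +
        ((Submodule.orthogonalProjectionOnto Kᗮ x : Kᗮ) : V) = x :=
      K.starProjection_add_starProjection_orthogonal x
    set k : K := Submodule.orthogonalProjectionOnto K x with hk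
    set w : Kᗮ := Submodule.orthogonalProjectionOnto Kᗮ x with hw
    have hDx : D x = D ((w : V)) := by
      conv_lhs => rw [← hx]
      rw [map_add, hker _ k.2, zero_add]
    rw [hDx]
    have hmem : D ((w : V)) ∈ Kᗮ := hDW _ w.2
    have hproj : Submodule.orthogonalProjectionOnto Kᗮ (D (w : V)) = Dw w := by
      have : D ((w : V)) = ((Dw w : Kᗮ) : V) := (hDwcoe w).symm
      rw [this, Submodule.orthogonalProjectionOnto_mem_subspace_eq_self]
    have h1 : E (D (w : V)) = ((eDw.symm (Dw w) : Kᗮ) : V) := by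
      rw [hEdef]
      simp only [LinearMap.comp_apply, LinearEquiv.coe_coe, Submodule.coe_subtype,
        ContinuousLinearMap.coe_coe]
      rw [hproj]
    rw [h1, ← heDw w, eDw.symm_apply_apply]
    rfl
  -- τ anticommutes with D
  have hanti : ∀ x : V, τ (D x) = -(D (τ x)) := by
    intro x
    obtain ⟨p, m, hp, hm, rfl⟩ := Submodule.codisjoint_iff_exists_add_eq.mp hcompl.codisjoint x
    rw [map_add, map_add, map_add, hτp p hp, hτm m hm]
    rw [hτm _ (hDodd.1 p hp), hτp _ (hDodd.2 m hm)]
    rw [map_add, map_neg]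
    abel
  -- M commutes with D
  have hcommDA : Commute D A := by
    have h1 : Commute D (D ∘L D) := (Commute.refl D).mul_right (Commute.refl D)
    exact h1.smul_right _
  have hcommDexp : Commute D (NormedSpace.exp A) := hcommDA.exp_right
  have hMD : ∀ x : V, M (D x) = D (M x) := by
    intro x
    have h1 : NormedSpace.exp A (D x) = D (NormedSpace.exp A x) := by
      have := DFunLike.congr_fun hcommDexp.eq x
      simpa [ContinuousLinearMap.mul_apply] using this.symm
    have h2 : H (D (NormedSpace.exp A x)) = D (H (NormedSpace.exp A x)) := by
      have := DFunLike.congr_fun hcomm (NormedSpace.exp A x)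
      simpa using this
    show H (NormedSpace.exp A (D x)) = D (H (NormedSpace.exp A x))
    rw [h1, h2]
  -- supertrace over Kᗮ vanishes
  have hz : LinearMap.trace ℂ V (τ ∘ₗ M ∘ₗ Pw) = 0 := by
    have e1 : τ ∘ₗ M ∘ₗ Pw = -(Dl ∘ₗ (τ ∘ₗ M ∘ₗ E)) := by
      ext x
      simp only [LinearMap.comp_apply, LinearMap.neg_apply]
      rw [← hDE x]
      have : M (D (E x)) = D (M (E x)) := hMD (E x)
      rw [this]
      have := hanti (M (E x))
      rw [this]
      rfl
    have e2 : (τ ∘ₗ M ∘ₗ E) ∘ₗ Dl = τ ∘ₗ M ∘ₗ Pw := by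
      ext x
      simp only [LinearMap.comp_apply]
      rw [← hED x]
      rfl
    have h3 : LinearMap.trace ℂ V (τ ∘ₗ M ∘ₗ Pw) =
        -(LinearMap.trace ℂ V (τ ∘ₗ M ∘ₗ Pw)) := by
      conv_lhs => rw [e1]
      rw [map_neg]
      rw [LinearMap.trace_comp_comm' (τ ∘ₗ M ∘ₗ E) Dl]
      rw [e2]
    exact CharZero.eq_neg_self_iff.mp h3
  -- split the supertrace
  have hsplit : τ ∘ₗ M = (τ ∘ₗ M ∘ₗ Pk) + (τ ∘ₗ M ∘ₗ Pw) := by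
    ext x
    simp only [LinearMap.comp_apply, LinearMap.add_apply]
    rw [← map_add τ, ← map_add M]
    congr 1
    congr 1
    exact (K.starProjection_add_starProjection_orthogonal x).symm
  -- exp acts as identity on the kernel
  have hMPk : τ ∘ₗ M ∘ₗ Pk = τ ∘ₗ (H : V →ₗ[ℂ] V) ∘ₗ Pk := by
    ext x
    simp only [LinearMap.comp_apply]
    congr 1
    have hkx : (Pk x : V) ∈ K := by
      simp only [hPkdef, LinearMap.comp_apply, Submodule.coe_subtype]
      exact (Submodule.orthogonalProjectionOnto K x).2
    have hA0 : A (Pk x) = 0 := by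
      rw [hAdef]
      simp only [ContinuousLinearMap.smul_apply, ContinuousLinearMap.comp_apply]
      rw [hker _ hkx, map_zero, smul_zero]
    have hexp : NormedSpace.exp A (Pk x) = Pk x := exp_apply_of_eq_zero V A (Pk x) hA0
    show H (NormedSpace.exp A (Pk x)) = H (Pk x)
    rw [hexp]
  rw [hsplit, map_add, hz, add_zero, hMPk]
end

section
/- Let R be a (not necessarily commutative) ring and let P, E, F, G ∈ R satisfy P² = P, PF = 0, FP = 0, FG = GF, and GF² = 1 − P. Set α = F², β = EF + FE, and consider ϑ' = E². Then P·(ϑ' − β·G·β)·P = (P E P)². (This is the algebraic identity underlying Bismut's Theorem [B11b, Theorem 2.16.1] (Theorem 3.14/equation (3.5.34) of the paper), asserting that the projected operator P(ϑ − βα⁻¹β)P recovers the elliptic Laplacian; here G plays the role of the inverse of α = F² on the complement of the kernel of F, and β = [E,F] is the supercommutator of the odd elements E and F.) -/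
/-- The algebraic identity underlying Bismut's Theorem 2.16.1 (equation (3.5.34)):
in a ring, if `P² = P`, `PF = FP = 0`, `FG = GF` and `GF² = 1 − P`, then, with
`α = F²`, `β = EF + FE` and `ϑ' = E²`, one has `P(ϑ' − βGβ)P = (PEP)²`. -/
theorem projected_hypoelliptic_identity
    {R : Type*} [Ring R] (P E F G : R)
    (hP : P * P = P) (hPF : P * F = 0) (hFP : F * P = 0)
    (hFG : F * G = G * F) (hGF : G * (F * F) = 1 - P) :
    P * (E * E - (E * F + F * E) * G * (E * F + F * E)) * P =
      (P * E * P) * (P * E * P) := by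
  have h1 : P * (E * F + F * E) = P * E * F := by
    rw [mul_add, ← mul_assoc P F E, hPF, zero_mul, add_zero, ← mul_assoc]
  have h2 : (E * F + F * E) * P = F * E * P := by
    rw [add_mul, mul_assoc E F P, hFP, mul_zero, zero_add]
  have key : P * ((E * F + F * E) * G * (E * F + F * E)) * P
      = P * E * (1 - P) * E * P := by
    calc P * ((E * F + F * E) * G * (E * F + F * E)) * P
        = (P * (E * F + F * E)) * G * ((E * F + F * E) * P) := by noncomm_ring
      _ = P * E * F * G * (F * E * P) := by rw [h1, h2]
      _ = P * E * (G * (F * F)) * E * P := by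
          rw [show P * E * F * G * (F * E * P) = P * E * (F * G) * F * E * P by noncomm_ring, hFG]
          noncomm_ring
      _ = P * E * (1 - P) * E * P := by rw [hGF]
  have expand : P * (E * E - (E * F + F * E) * G * (E * F + F * E)) * P
      = P * E * E * P - P * ((E * F + F * E) * G * (E * F + F * E)) * P := by
    noncomm_ring
  rw [expand, key]
  have : P * E * (1 - P) * E * P = P * E * E * P - P * E * P * E * P := by
    noncomm_ring
  rw [this]
  calc P * E * E * P - (P * E * E * P - P * E * P * E * P)
      = P * E * P * E * P := by abel
    _ = P * E * P * (P * E * P) := by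
        rw [show P * E * P * (P * E * P) = P * E * (P * P) * E * P by noncomm_ring, hP]
end

section
/- Let W be a real inner product space of even dimension 2l, and let A be an orthogonal endomorphism of W with det(A) = 1. Then for every real t, |det(id_W − e^t A) · det(id_W − e^{−t} A)|^{1/2} = |∑_{j=0}^{2l} (−1)^j tr(Λ^j A) e^{(l−j)t}|. (The linear-algebra core of Shen's Proposition 4.3.6 (Proposition [Shen16, Proposition 6.5]), which removes the denominator |det(1 − Ad(γ))|_{𝔷₀^⊥}|^{1/2} in the dynamical zeta function.) -/
open ExteriorAlgebra

namespace ShenAux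

open Matrix

variable {W : Type*} [AddCommGroup W] [Module ℝ W]
variable {n : ℕ} (b : Module.Basis (Fin n) ℝ W)

/-- increasing enumeration of a card-`j` subset of `Fin n`. -/
def ord {j : ℕ} (S : {S : Finset (Fin n) // S.card = j}) (k : Fin j) : Fin n :=
  (S.1.orderIsoOfFin S.2 k : Fin n)

lemma ord_mem {j : ℕ} (S : {S : Finset (Fin n) // S.card = j}) (k : Fin j) :
    ord S k ∈ S.1 := (S.1.orderIsoOfFin S.2 k).2

lemma ord_injective {j : ℕ} (S : {S : Finset (Fin n) // S.card = j}) :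
    Function.Injective (ord S) := fun k k' h =>
  (S.1.orderIsoOfFin S.2).injective (Subtype.ext h)

/-- basic wedge in the ambient exterior algebra -/
noncomputable def awedge (j : ℕ) (S : {S : Finset (Fin n) // S.card = j}) :
    ExteriorAlgebra ℝ W :=
  ιMulti ℝ j (fun k => b (ord S k))

lemma awedge_mem (j : ℕ) (S : {S : Finset (Fin n) // S.card = j}) :
    awedge b j S ∈ ⋀[ℝ]^j W := ιMulti_range ℝ j ⟨_, rfl⟩

noncomputable def wedge (j : ℕ) (S : {S : Finset (Fin n) // S.card = j}) : ⋀[ℝ]^j W :=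
  ⟨awedge b j S, awedge_mem b j S⟩

/-- the dual alternating map attached to a subset -/
noncomputable def fT (j : ℕ) (T : {S : Finset (Fin n) // S.card = j}) :
    W [⋀^Fin j]→ₗ[ℝ] ℝ :=
  Matrix.detRowAlternating.compLinearMap (LinearMap.pi (fun i => b.coord (ord T i)))

lemma fT_apply (j : ℕ) (T : {S : Finset (Fin n) // S.card = j}) (v : Fin j → W) :
    fT b j T v = Matrix.det (Matrix.of fun k i => b.repr (v k) (ord T i)) := rfl

/-- dual functional on the ambient exterior algebra -/
noncomputable def phi (j : ℕ) (T : {S : Finset (Fin n) // S.card = j}) :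
    ExteriorAlgebra ℝ W →ₗ[ℝ] ℝ :=
  liftAlternating (Pi.single j (fT b j T))

lemma phi_ιMulti (j : ℕ) (T : {S : Finset (Fin n) // S.card = j}) (v : Fin j → W) :
    phi b j T (ιMulti ℝ j v) = fT b j T v := by
  rw [phi, liftAlternating_apply_ιMulti, Pi.single_eq_same]

lemma fT_wedge (j : ℕ) (T S : {S : Finset (Fin n) // S.card = j}) :
    fT b j T (fun k => b (ord S k)) = if T = S then 1 else 0 := by
  rw [fT_apply]
  by_cases h : T = S
  · subst h
    simp only [if_true]
    have : (Matrix.of fun k i => b.repr (b (ord T k)) (ord T i))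
        = (1 : Matrix (Fin j) (Fin j) ℝ) := by
      ext k i
      rw [Matrix.of_apply, b.repr_self, Finsupp.single_apply, Matrix.one_apply]
      by_cases hk : k = i
      · simp [hk]
      · have : ord T k ≠ ord T i := fun hc => hk (ord_injective T hc)
        simp [this, hk]
    rw [this, Matrix.det_one]
  · rw [if_neg h]
    have hne : T.1 ≠ S.1 := fun hc => h (Subtype.ext hc)
    have : ¬ (T.1 ⊆ S.1) := by
      intro hsub
      exact hne (Finset.eq_of_subset_of_card_le hsub (by rw [T.2, S.2]))
    obtain ⟨x, hxT, hxS⟩ := Finset.not_subset.mp this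
    obtain ⟨i₀, hi₀⟩ := (T.1.orderIsoOfFin T.2).surjective ⟨x, hxT⟩
    apply Matrix.det_eq_zero_of_column_eq_zero i₀
    intro k
    rw [Matrix.of_apply, b.repr_self, Finsupp.single_apply]
    have : ord S k ≠ ord T i₀ := by
      intro hc
      apply hxS
      have hx : ord T i₀ = x := by rw [ord, hi₀]
      rw [← hx, ← hc]; exact ord_mem S k
    simp [this]

lemma phi_wedge (j : ℕ) (T S : {S : Finset (Fin n) // S.card = j}) :
    phi b j T (awedge b j S) = if T = S then 1 else 0 := by
  rw [awedge, phi_ιMulti, fT_wedge]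

lemma ιMulti_basis_mem_span (j : ℕ) (r : Fin j → Fin n) :
    ιMulti ℝ j (fun k => b (r k)) ∈ Submodule.span ℝ (Set.range (awedge b j)) := by
  by_cases hr : Function.Injective r
  · set S : {S : Finset (Fin n) // S.card = j} :=
      ⟨Finset.image r Finset.univ, by
        rw [Finset.card_image_of_injective _ hr, Finset.card_univ, Fintype.card_fin]⟩ with hS
    have hmem : ∀ k, r k ∈ S.1 := fun k => Finset.mem_image_of_mem r (Finset.mem_univ k)
    have hbij : Function.Bijective (fun k => (⟨r k, hmem k⟩ : S.1)) := by
      rw [Fintype.bijective_iff_injective_and_card]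
      constructor
      · intro k k' h
        exact hr (congrArg Subtype.val h)
      · rw [Fintype.card_coe, S.2, Fintype.card_fin]
    set e : Fin j ≃ S.1 := (S.1.orderIsoOfFin S.2).toEquiv with he
    set σ : Equiv.Perm (Fin j) :=
      (Equiv.ofBijective _ hbij).trans e.symm with hσ
    have hcomp : (fun k => b (ord S k)) ∘ σ = fun k => b (r k) := by
      funext k
      have h1 : e (σ k) = ⟨r k, hmem k⟩ := by
        rw [hσ, Equiv.trans_apply, Equiv.apply_symm_apply, Equiv.ofBijective_apply]
      have h2 : ord S (σ k) = r k := congrArg Subtype.val h1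
      simp only [Function.comp_apply, h2]
    have := AlternatingMap.map_perm (ιMulti ℝ j (M := W)) (fun k => b (ord S k)) σ
    rw [hcomp] at this
    rw [this]
    exact Submodule.smul_mem _ _ (Submodule.subset_span ⟨S, rfl⟩)
  · simp only [Function.not_injective_iff] at hr
    obtain ⟨k, k', hkk', hne⟩ := hr
    have : ιMulti ℝ j (fun k => b (r k)) = 0 :=
      AlternatingMap.map_eq_zero_of_eq _ _ (by rw [hkk']) hne
    rw [this]; exact Submodule.zero_mem _

lemma span_awedge (j : ℕ) :
    Submodule.span ℝ (Set.range (awedge b j)) = ⋀[ℝ]^j W := by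
  rw [← ιMulti_span_fixedDegree]
  refine le_antisymm (Submodule.span_le.2 ?_) (Submodule.span_le.2 ?_)
  · rintro _ ⟨S, rfl⟩
    exact Submodule.subset_span ⟨_, rfl⟩
  · rintro _ ⟨v, rfl⟩
    have hv : ιMulti ℝ j v = ιMulti ℝ j (fun k => ∑ i : Fin n, b.repr (v k) i • b i) := by
      congr 1; funext k; exact (b.sum_repr (v k)).symm
    rw [hv]
    have hexp := MultilinearMap.map_sum (f := (ιMulti ℝ j (M := W)).toMultilinearMap)
      (g := fun (k : Fin j) (i : Fin n) => b.repr (v k) i • b i)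
    simp only [AlternatingMap.coe_multilinearMap] at hexp
    rw [hexp]
    apply Submodule.sum_mem
    intro r _
    have hsm := MultilinearMap.map_smul_univ (ιMulti ℝ j (M := W)).toMultilinearMap
      (fun k => b.repr (v k) (r k)) (fun k => b (r k))
    simp only [AlternatingMap.coe_multilinearMap] at hsm
    rw [hsm]
    exact Submodule.smul_mem _ _ (ιMulti_basis_mem_span b j r)

/-- dual functional on the exterior power -/
noncomputable def phi' (j : ℕ) (T : {S : Finset (Fin n) // S.card = j}) :
    ⋀[ℝ]^j W →ₗ[ℝ] ℝ :=
  (phi b j T).comp (Submodule.subtype _)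

lemma phi'_wedge (j : ℕ) (T S : {S : Finset (Fin n) // S.card = j}) :
    phi' b j T (wedge b j S) = if T = S then 1 else 0 := phi_wedge b j T S

lemma wedge_li (j : ℕ) : LinearIndependent ℝ (wedge b j) := by
  rw [Fintype.linearIndependent_iff]
  intro g hg T
  have := congrArg (phi' b j T) hg
  rw [map_sum, map_zero] at this
  simp only [_root_.map_smul, phi'_wedge, smul_eq_mul, mul_ite, mul_one, mul_zero] at this
  rwa [Finset.sum_ite_eq (Finset.univ) T (fun S => g S), if_pos (Finset.mem_univ T)] at this

lemma wedge_span (j : ℕ) : ⊤ ≤ Submodule.span ℝ (Set.range (wedge b j)) := by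
  have hinj := Submodule.injective_subtype (⋀[ℝ]^j W)
  have hcomp : (⋀[ℝ]^j W).subtype ∘ (wedge b j) = awedge b j := rfl
  have heq : Submodule.map (⋀[ℝ]^j W).subtype (Submodule.span ℝ (Set.range (wedge b j)))
      = Submodule.map (⋀[ℝ]^j W).subtype ⊤ := by
    rw [Submodule.map_span, Submodule.map_top, Submodule.range_subtype, ← Set.range_comp,
      hcomp, span_awedge]
  exact le_of_eq (Submodule.map_injective_of_injective hinj heq).symm

noncomputable def wbasis (j : ℕ) :
    Module.Basis {S : Finset (Fin n) // S.card = j} ℝ (⋀[ℝ]^j W) :=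
  Module.Basis.mk (wedge_li b j) (wedge_span b j)

lemma wbasis_repr (j : ℕ) (x : ⋀[ℝ]^j W) (T : {S : Finset (Fin n) // S.card = j}) :
    (wbasis b j).repr x T = phi' b j T x := by
  have : (Finsupp.lapply T).comp ((wbasis b j).repr : ⋀[ℝ]^j W →ₗ[ℝ] _) = phi' b j T := by
    apply Module.Basis.ext (wbasis b j)
    intro S
    simp only [LinearMap.comp_apply, LinearEquiv.coe_coe, Module.Basis.repr_self,
      Finsupp.lapply_apply, Finsupp.single_apply]
    rw [show (wbasis b j) S = wedge b j S from Module.Basis.mk_apply _ _ _, phi'_wedge]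
    by_cases h : S = T
    · subst h; simp
    · rw [if_neg h, if_neg (Ne.symm h)]
  exact congrArg (fun f => f x) this

lemma trace_eq_sum_phi (j : ℕ) (g : ⋀[ℝ]^j W →ₗ[ℝ] ⋀[ℝ]^j W) :
    LinearMap.trace ℝ (⋀[ℝ]^j W) g
      = ∑ T : {S : Finset (Fin n) // S.card = j}, phi' b j T (g (wedge b j T)) := by
  rw [LinearMap.trace_eq_matrix_trace ℝ (wbasis b j) g, Matrix.trace]
  apply Finset.sum_congr rfl
  intro T _
  rw [Matrix.diag_apply, LinearMap.toMatrix_apply, wbasis_repr]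
  congr 2
  rw [wbasis, Module.Basis.mk_apply]

theorem trace_exteriorPowerMap (A : W →ₗ[ℝ] W) (j : ℕ) :
    LinearMap.trace ℝ (⋀[ℝ]^j W) (exteriorPowerMap j A)
      = ∑ T : {S : Finset (Fin n) // S.card = j},
          Matrix.det (((LinearMap.toMatrix b b A)ᵀ).submatrix (ord T) (ord T)) := by
  rw [trace_eq_sum_phi]
  apply Finset.sum_congr rfl
  intro T _
  have h1 : ((exteriorPowerMap j A (wedge b j T)) : ExteriorAlgebra ℝ W)
      = ιMulti ℝ j (A ∘ (fun k => b (ord T k))) := by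
    rw [exteriorPowerMap, LinearMap.restrict_coe_apply]
    exact map_apply_ιMulti A _
  rw [phi', LinearMap.comp_apply, Submodule.coe_subtype, h1, phi_ιMulti, fT_apply]
  congr 1
  ext k i
  simp only [Matrix.of_apply, Matrix.submatrix_apply, Matrix.transpose_apply,
    LinearMap.toMatrix_apply, Function.comp_apply]

lemma det_rows_piecewise (N : Matrix (Fin n) (Fin n) ℝ) (s : Finset (Fin n)) :
    Matrix.det (Matrix.of fun i =>
        s.piecewise (fun i' => N i') (fun i' => (1 : Matrix (Fin n) (Fin n) ℝ) i') i)
      = Matrix.det (N.submatrix (Subtype.val : {x // x ∈ s} → Fin n) Subtype.val) := by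
  classical
  set e : {x // x ∈ s} ⊕ {x // x ∉ s} ≃ Fin n := Equiv.sumCompl (· ∈ s) with he
  rw [← Matrix.det_submatrix_equiv_self e]
  have hblock : (Matrix.of fun i =>
        s.piecewise (fun i' => N i') (fun i' => (1 : Matrix (Fin n) (Fin n) ℝ) i') i).submatrix e e
      = Matrix.fromBlocks (N.submatrix Subtype.val Subtype.val)
          (N.submatrix Subtype.val Subtype.val) 0 1 := by
    ext i j
    cases i with
    | inl i =>
      have hi : (e (Sum.inl i) : Fin n) ∈ s := by simp [he]
      cases j with
      | inl j =>
        simp [Matrix.submatrix_apply, Finset.piecewise_eq_of_mem _ _ _ hi, he]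
      | inr j =>
        simp [Matrix.submatrix_apply, Finset.piecewise_eq_of_mem _ _ _ hi, he]
    | inr i =>
      cases j with
      | inl j =>
        have hij : (i : Fin n) ≠ (j : Fin n) := fun hc => i.2 (hc ▸ j.2)
        simp [he, Finset.piecewise_eq_of_notMem _ _ _ i.2, Matrix.one_apply_ne hij]
      | inr j =>
        have hone : (1 : Matrix (Fin n) (Fin n) ℝ) i.1 j.1
            = (1 : Matrix {x // x ∉ s} {x // x ∉ s} ℝ) i j := by
          rw [Matrix.one_apply, Matrix.one_apply]
          simp [Subtype.ext_iff]
        simp [he, Finset.piecewise_eq_of_notMem _ _ _ i.2, hone]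
  rw [hblock, Matrix.det_fromBlocks_zero₂₁, Matrix.det_one, mul_one]

lemma det_one_add_smul_expansion (N : Matrix (Fin n) (Fin n) ℝ) (c : ℝ) :
    Matrix.det (1 + c • N)
      = ∑ j ∈ Finset.range (n + 1), c ^ j *
          ∑ T : {S : Finset (Fin n) // S.card = j},
            Matrix.det (N.submatrix (ord T) (ord T)) := by
  classical
  have h1 : Matrix.det (1 + c • N)
      = ∑ s : Finset (Fin n), c ^ s.card *
          Matrix.det (N.submatrix (Subtype.val : {x // x ∈ s} → Fin n) Subtype.val) := by
    have hrow : (1 + c • N : Matrix (Fin n) (Fin n) ℝ)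
        = Matrix.of ((fun i => c • N i) + (fun i => (1 : Matrix (Fin n) (Fin n) ℝ) i)) := by
      ext i j
      simp [Matrix.add_apply, Matrix.smul_apply, add_comm]
    have hdet : ∀ m : Fin n → (Fin n → ℝ), Matrix.det (Matrix.of m)
        = (Matrix.detRowAlternating (R := ℝ) (n := Fin n)).toMultilinearMap m := fun _ => rfl
    rw [hrow, hdet, MultilinearMap.map_add_univ]
    apply Finset.sum_congr rfl
    intro s _
    have hsplit : (s.piecewise (fun i => c • N i) (fun i => (1 : Matrix (Fin n) (Fin n) ℝ) i))
        = fun i => (s.piecewise (fun _ => c) (fun _ => (1:ℝ)) i) •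
            (s.piecewise (fun i' => N i') (fun i' => (1 : Matrix (Fin n) (Fin n) ℝ) i') i) := by
      funext i
      by_cases h : i ∈ s
      · simp [Finset.piecewise_eq_of_mem _ _ _ h]
      · simp [Finset.piecewise_eq_of_notMem _ _ _ h]
    rw [hsplit, MultilinearMap.map_smul_univ]
    have hprod : (∏ i, s.piecewise (fun _ => c) (fun _ => (1:ℝ)) i) = c ^ s.card := by
      rw [Finset.prod_piecewise]
      simp [Finset.univ_inter]
    rw [hprod]
    congr 1
    exact (hdet _).symm.trans (det_rows_piecewise N s)
  rw [h1]
  rw [← Finset.sum_fiberwise_of_maps_to (g := fun s : Finset (Fin n) => s.card)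
    (t := Finset.range (n+1))
    (fun s _ => Finset.mem_range.mpr (Nat.lt_succ_of_le (s.card_le_univ.trans_eq (by simp))))]
  apply Finset.sum_congr rfl
  intro j _
  rw [Finset.mul_sum]
  have hiff : ∀ s : Finset (Fin n), s ∈ Finset.univ.filter (fun s => s.card = j) ↔ s.card = j := by
    intro s; simp
  have hcongr : ∑ s ∈ Finset.univ.filter (fun s : Finset (Fin n) => s.card = j),
      c ^ s.card * Matrix.det (N.submatrix (Subtype.val : {x // x ∈ s} → Fin n) Subtype.val)
      = ∑ s ∈ Finset.univ.filter (fun s : Finset (Fin n) => s.card = j),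
      c ^ j * Matrix.det (N.submatrix (Subtype.val : {x // x ∈ s} → Fin n) Subtype.val) :=
    Finset.sum_congr rfl (fun s hs => by rw [(Finset.mem_filter.mp hs).2])
  rw [hcongr]
  rw [Finset.sum_subtype _ hiff (fun s => c ^ j *
      Matrix.det (N.submatrix (Subtype.val : {x // x ∈ s} → Fin n) Subtype.val))]
  apply Finset.sum_congr rfl
  intro T _
  congr 1
  rw [← Matrix.det_submatrix_equiv_self (T.1.orderIsoOfFin T.2).toEquiv
      (N.submatrix (Subtype.val : {x // x ∈ T.1} → Fin n) Subtype.val),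
    Matrix.submatrix_submatrix]
  rfl

lemma palindromy {m : ℕ} (hm : Even m) (N : Matrix (Fin m) (Fin m) ℝ)
    (horth : N * Nᵀ = 1) (hdetN : N.det = 1) (u : ℝ) (hu : u ≠ 0) :
    u ^ m * Matrix.det (1 + (-u⁻¹) • N) = Matrix.det (1 + (-u) • N) := by
  have h1 : u ^ m * Matrix.det (1 + (-u⁻¹) • N)
      = Matrix.det (u • (1 : Matrix (Fin m) (Fin m) ℝ) - N) := by
    rw [show u • (1 : Matrix (Fin m) (Fin m) ℝ) - N = u • (1 + (-u⁻¹) • N) from ?_]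
    · rw [Matrix.det_smul, Fintype.card_fin]
    · rw [smul_add, smul_smul]
      rw [show u * -u⁻¹ = -1 by field_simp]
      rw [neg_one_smul, ← sub_eq_add_neg]
  have h2 : Matrix.det (u • (1 : Matrix (Fin m) (Fin m) ℝ) - N)
      = Matrix.det (u • (1 : Matrix (Fin m) (Fin m) ℝ) - Nᵀ) := by
    rw [← Matrix.det_transpose (u • 1 - N), Matrix.transpose_sub, Matrix.transpose_smul,
      Matrix.transpose_one]
  have h3 : (1 + (-u) • N) * Nᵀ = Nᵀ - u • 1 := by
    rw [add_mul, one_mul, smul_mul, horth, neg_smul, ← sub_eq_add_neg]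
  have h4 : Matrix.det (u • (1 : Matrix (Fin m) (Fin m) ℝ) - Nᵀ)
      = Matrix.det (Nᵀ - u • 1) := by
    rw [show u • (1 : Matrix (Fin m) (Fin m) ℝ) - Nᵀ = (-1 : ℝ) • (Nᵀ - u • 1) by
      rw [neg_one_smul]; abel]
    rw [Matrix.det_smul, Fintype.card_fin, hm.neg_one_pow, one_mul]
  rw [h1, h2, h4, ← h3, Matrix.det_mul, Matrix.det_transpose, hdetN, mul_one]

end ShenAux

open ShenAux Matrix

/-- The linear-algebra core of Shen's Proposition 6.5: if `A` is an orthogonal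
endomorphism with `det A = 1` of a real inner product space `W` of even dimension `2l`,
then for every real `t`,
`|det(1 − e^t A) · det(1 − e^{−t} A)|^{1/2} = |∑_{j=0}^{2l} (−1)^j tr(Λ^j A) e^{(l−j)t}|`. -/
theorem abs_sqrt_det_one_sub_exp_eq_abs_alternating_sum
    (W : Type*) [NormedAddCommGroup W] [InnerProductSpace ℝ W] [FiniteDimensional ℝ W]
    (l : ℕ) (hdim : Module.finrank ℝ W = 2 * l)
    (A : W →ₗ[ℝ] W)
    (hA : ∀ x y : W, inner ℝ (A x) (A y) = (inner ℝ x y : ℝ))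
    (hdet : LinearMap.det A = 1) (t : ℝ) :
    Real.sqrt |LinearMap.det (LinearMap.id - Real.exp t • A) *
        LinearMap.det (LinearMap.id - Real.exp (-t) • A)| =
      |∑ j ∈ Finset.range (2 * l + 1),
        (-1 : ℝ) ^ j * LinearMap.trace ℝ (⋀[ℝ]^j W) (exteriorPowerMap j A) *
          Real.exp (((l : ℝ) - (j : ℝ)) * t)| := by
  classical
  set v : OrthonormalBasis (Fin (2*l)) ℝ W :=
    (stdOrthonormalBasis ℝ W).reindex (finCongr hdim) with hv
  set b : Module.Basis (Fin (2*l)) ℝ W := v.toBasis with hb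
  set M : Matrix (Fin (2*l)) (Fin (2*l)) ℝ := LinearMap.toMatrix b b A with hM
  set N : Matrix (Fin (2*l)) (Fin (2*l)) ℝ := Mᵀ with hN
  have hMentry : ∀ k i, M k i = inner ℝ (v k) (A (v i)) := by
    intro k i
    rw [hM, LinearMap.toMatrix_apply]
    rw [show b i = v i from by rw [hb, OrthonormalBasis.coe_toBasis]]
    rw [hb, OrthonormalBasis.coe_toBasis_repr_apply, OrthonormalBasis.repr_apply_apply]
  have horth : N * Nᵀ = 1 := by
    rw [hN, Matrix.transpose_transpose]
    ext i j
    rw [Matrix.mul_apply, Matrix.one_apply]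
    simp only [Matrix.transpose_apply]
    calc ∑ k, M k i * M k j
        = ∑ k, (inner ℝ (A (v i)) (v k) * inner ℝ (v k) (A (v j)) : ℝ) := by
          apply Finset.sum_congr rfl
          intro k _
          rw [hMentry k i, hMentry k j, real_inner_comm (v k) (A (v i))]
      _ = inner ℝ (A (v i)) (A (v j)) := v.sum_inner_mul_inner _ _
      _ = inner ℝ (v i) (v j) := hA _ _
      _ = if i = j then 1 else 0 := orthonormal_iff_ite.mp v.orthonormal i j
  have hdetN : N.det = 1 := by
    rw [hN, Matrix.det_transpose, hM, LinearMap.det_toMatrix, hdet]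
  have hdetlin : ∀ u : ℝ, LinearMap.det (LinearMap.id - u • A)
      = Matrix.det (1 + (-u) • N) := by
    intro u
    rw [← LinearMap.det_toMatrix b, map_sub, LinearMap.toMatrix_id, _root_.map_smul, ← hM]
    rw [← Matrix.det_transpose, Matrix.transpose_sub, Matrix.transpose_one,
      Matrix.transpose_smul, ← hN, sub_eq_add_neg, ← neg_smul]
  set Q : ℕ → ℝ := fun j => ∑ T : {S : Finset (Fin (2*l)) // S.card = j},
      Matrix.det (N.submatrix (ord T) (ord T)) with hQ
  have htr : ∀ j, LinearMap.trace ℝ (⋀[ℝ]^j W) (exteriorPowerMap j A) = Q j := by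
    intro j
    rw [trace_exteriorPowerMap b A j, hQ, ← hM, ← hN]
  have hexp : ∀ u : ℝ, Matrix.det (1 + (-u) • N)
      = ∑ j ∈ Finset.range (2*l + 1), (-u) ^ j * Q j := by
    intro u
    exact det_one_add_smul_expansion N (-u)
  set S : ℝ := ∑ j ∈ Finset.range (2*l + 1),
      (-1:ℝ)^j * Q j * Real.exp (((l:ℝ) - (j:ℝ)) * t) with hS
  have hRHS : (∑ j ∈ Finset.range (2 * l + 1),
      (-1 : ℝ) ^ j * LinearMap.trace ℝ (⋀[ℝ]^j W) (exteriorPowerMap j A) *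
        Real.exp (((l : ℝ) - (j : ℝ)) * t)) = S := by
    rw [hS]
    apply Finset.sum_congr rfl
    intro j _
    rw [htr j]
  have hSP : S = Real.exp ((l:ℝ)*t) * Matrix.det (1 + (-(Real.exp (-t))) • N) := by
    rw [hS, hexp (Real.exp (-t)), Finset.mul_sum]
    apply Finset.sum_congr rfl
    intro j _
    have he1 : Real.exp (((l:ℝ) - (j:ℝ)) * t)
        = Real.exp ((l:ℝ)*t) * Real.exp (-t) ^ j := by
      rw [← Real.exp_nat_mul, ← Real.exp_add]
      congr 1; ring
    rw [he1, neg_pow]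
    ring
  have hpal := palindromy (even_two_mul l) N horth hdetN (Real.exp t) (Real.exp_ne_zero t)
  rw [← Real.exp_neg] at hpal
  have hsq : S ^ 2 = Matrix.det (1 + (-(Real.exp t)) • N) *
      Matrix.det (1 + (-(Real.exp (-t))) • N) := by
    have hexp2 : Real.exp ((l:ℝ)*t) ^ 2 = Real.exp t ^ (2*l) := by
      rw [← Real.exp_nat_mul, ← Real.exp_nat_mul]
      congr 1; push_cast; ring
    calc S ^ 2 = Real.exp ((l:ℝ)*t) ^ 2 * Matrix.det (1 + (-(Real.exp (-t))) • N) *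
          Matrix.det (1 + (-(Real.exp (-t))) • N) := by rw [hSP]; ring
      _ = (Real.exp t ^ (2*l) * Matrix.det (1 + (-(Real.exp (-t))) • N)) *
          Matrix.det (1 + (-(Real.exp (-t))) • N) := by rw [hexp2]
      _ = _ := by rw [hpal]
  rw [hdetlin (Real.exp t), hdetlin (Real.exp (-t)), hRHS, ← hsq,
    abs_of_nonneg (sq_nonneg S), Real.sqrt_sq_eq_abs]
end
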